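/- arXiv:2302.06240 — 3 statements merged into one kernel-verified Lean document; each statement's English description precedes it below -/
import Mathlib

section
/- Let (M_N)_{N≥1} be a sequence of closed subspaces of H¹(Ω) ∩ L²₀(Ω) such that for every p ∈ H¹(Ω) ∩ L²₀(Ω), the orthogonal projections P_{M_N} p (with respect to the inner product (p,q) ↦ (∇p,∇q)) converge to p in H¹(Ω). Define V_N = { v ∈ L²(Ω)^d : (v, ∇q)_{L²} = 0 for all q ∈ M_N } and V(Ω) = { v ∈ L²(Ω)^d : (v, ∇ξ)_{L²} = 0 for all ξ ∈ H¹(Ω) }. Suppose W is dense in V(Ω) for the L² norm and for each N there is Π_N : W → V_N with Π_N φ → φ in L²(Ω)^d for every φ ∈ W. If (v_N)_{N≥1} ⊂ L²(Ω)^d converges strongly in L²(Ω)^d to v, then P_{V_N} v_N converges strongly in L²(Ω)^d to P_{V(Ω)} v, where P_{V_N} and P_{V(Ω)} denote the L²-orthogonal projections onto V_N and V(Ω). -/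
open Filter Topology
open scoped RealInnerProductSpace

/- STATEMENT 5 (abstract Hilbert-space formalization).
`H` plays the role of `L²(Ω)^d`, `Q` plays the role of `H¹(Ω) ∩ L²₀(Ω)` equipped with the
inner product `(p,q) ↦ (∇p, ∇q)`, and `grad : Q →L[ℝ] H` is the gradient operator.
`M N` are the closed pressure spaces `M_N`; `PM N` is the orthogonal projection onto `M N`
(characterized by membership `hPMmem` and orthogonality `hPMorth`), and by `hMconv`,
`P_{M_N} p → p` for every `p`.  `V_N = {v : (v, ∇q) = 0 ∀ q ∈ M_N}` and
`V(Ω) = {v : (v, ∇ξ) = 0 ∀ ξ}`; `PVN N` and `PV` are the `L²`-orthogonal projections onto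
these spaces, again characterized by membership and orthogonality.  `W` is dense in `V(Ω)`
for the `L²` norm and `Π_N : W → V_N` satisfies `Π_N φ → φ` in `L²`.
Conclusion: if `v_N → v` strongly then `P_{V_N} v_N → P_{V(Ω)} v` strongly. -/
theorem projection_continuity
    {H Q : Type*} [NormedAddCommGroup H] [InnerProductSpace ℝ H] [CompleteSpace H]
    [NormedAddCommGroup Q] [InnerProductSpace ℝ Q] [CompleteSpace Q]
    (grad : Q →L[ℝ] H)
    (M : ℕ → Submodule ℝ Q) (hMclosed : ∀ N, IsClosed (M N : Set Q))
    (PM : ℕ → Q → Q)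
    (hPMmem : ∀ N p, PM N p ∈ M N)
    (hPMorth : ∀ N p, ∀ q ∈ M N, ⟪p - PM N p, q⟫ = 0)
    (hMconv : ∀ p : Q, Tendsto (fun N => PM N p) atTop (𝓝 p))
    (PVN : ℕ → H → H)
    (hPVNmem : ∀ N x, ∀ q ∈ M N, ⟪PVN N x, grad q⟫ = 0)
    (hPVNorth : ∀ N x w, (∀ q ∈ M N, ⟪w, grad q⟫ = 0) → ⟪x - PVN N x, w⟫ = 0)
    (PV : H → H)
    (hPVmem : ∀ x, ∀ q : Q, ⟪PV x, grad q⟫ = 0)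
    (hPVorth : ∀ x w, (∀ q : Q, ⟪w, grad q⟫ = 0) → ⟪x - PV x, w⟫ = 0)
    (W : Set H)
    (hWdense : ∀ v : H, (∀ q : Q, ⟪v, grad q⟫ = 0) → v ∈ closure W)
    (Pi : ℕ → H → H)
    (hPimem : ∀ N, ∀ φ ∈ W, ∀ q ∈ M N, ⟪Pi N φ, grad q⟫ = 0)
    (hPiconv : ∀ φ ∈ W, Tendsto (fun N => Pi N φ) atTop (𝓝 φ))
    (v : ℕ → H) (vlim : H) (hv : Tendsto v atTop (𝓝 vlim)) :
    Tendsto (fun N => PVN N (v N)) atTop (𝓝 (PV vlim)) := by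
  rw [Metric.tendsto_atTop] at hv ⊢
  intro ε hε
  set u := PV vlim with hu
  set δ := ε / 8 with hδdef
  have hδ : 0 < δ := by positivity
  -- choose φ ∈ W close to u
  have huV : ∀ q : Q, ⟪u, grad q⟫ = 0 := hPVmem vlim
  have hucl : u ∈ closure W := hWdense u huV
  obtain ⟨φ, hφW, hφ⟩ : ∃ φ ∈ W, ‖u - φ‖ < δ := by
    rcases Metric.mem_closure_iff.1 hucl δ hδ with ⟨φ, hφW, hd⟩
    exact ⟨φ, hφW, by rwa [dist_eq_norm] at hd⟩
  -- the orthogonal part lies in the closure of the range of grad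
  set r := vlim - u with hr
  have hrcl : r ∈ closure ((LinearMap.range (grad : Q →ₗ[ℝ] H) : Submodule ℝ H) : Set H) := by
    have hmem : r ∈ ((LinearMap.range (grad : Q →ₗ[ℝ] H))ᗮ)ᗮ := by
      rw [Submodule.mem_orthogonal]
      intro w hw
      have hw' : ∀ q : Q, ⟪w, grad q⟫ = 0 := by
        intro q
        rw [real_inner_comm]
        exact (Submodule.mem_orthogonal _ w).1 hw (grad q) ⟨q, rfl⟩
      rw [real_inner_comm]
      exact hPVorth vlim w hw'
    rw [Submodule.orthogonal_orthogonal_eq_closure] at hmem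
    exact hmem
  obtain ⟨p, hp⟩ : ∃ p : Q, ‖r - grad p‖ < δ := by
    rcases Metric.mem_closure_iff.1 hrcl δ hδ with ⟨x, hx, hd⟩
    rcases hx with ⟨p, rfl⟩
    exact ⟨p, by rwa [dist_eq_norm] at hd⟩
  -- eventual smallness
  obtain ⟨N₁, hN₁⟩ := hv δ hδ
  obtain ⟨N₂, hN₂⟩ := (Metric.tendsto_atTop.1 (hPiconv φ hφW)) δ hδ
  have hgconv : Tendsto (fun N => grad p - grad (PM N p)) atTop (𝓝 0) := by
    have h0 : Tendsto (fun N => grad (PM N p)) atTop (𝓝 (grad p)) :=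
      (grad.continuous.tendsto p).comp (hMconv p)
    have := (tendsto_const_nhds (x := grad p) (f := atTop)).sub h0
    simpa using this
  obtain ⟨N₃, hN₃⟩ := (Metric.tendsto_atTop.1 hgconv) δ hδ
  refine ⟨max N₁ (max N₂ N₃), fun N hN => ?_⟩
  have hN1 : N₁ ≤ N := le_trans (le_max_left _ _) hN
  have hN2 : N₂ ≤ N := le_trans (le_trans (le_max_left _ _) (le_max_right _ _)) hN
  have hN3 : N₃ ≤ N := le_trans (le_trans (le_max_right _ _) (le_max_right _ _)) hN
  set w := PVN N (v N) - Pi N φ with hw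
  -- w ∈ V_N
  have hwperp : ∀ q ∈ M N, ⟪w, grad q⟫ = 0 := by
    intro q hq
    rw [hw, inner_sub_left, hPVNmem N (v N) q hq, hPimem N φ hφW q hq, sub_zero]
  have h1 : ⟪v N - PVN N (v N), w⟫ = 0 := hPVNorth N (v N) w hwperp
  have hsplit : v N - Pi N φ = (v N - PVN N (v N)) + w := by rw [hw]; abel
  have hsq : ‖w‖ * ‖w‖ = ⟪v N - Pi N φ, w⟫ := by
    rw [hsplit, inner_add_left, h1, zero_add, real_inner_self_eq_norm_mul_norm]
  have hdecomp : v N - Pi N φ =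
      (v N - vlim) + (r - grad p) + (grad p - grad (PM N p)) + grad (PM N p)
        + (u - φ) + (φ - Pi N φ) := by
    rw [hr]; abel
  have hgradPM : ⟪grad (PM N p), w⟫ = 0 := by
    rw [real_inner_comm]; exact hwperp (PM N p) (hPMmem N p)
  have hdec : ⟪v N - Pi N φ, w⟫ =
      ⟪v N - vlim, w⟫ + ⟪r - grad p, w⟫ + ⟪grad p - grad (PM N p), w⟫
        + ⟪u - φ, w⟫ + ⟪φ - Pi N φ, w⟫ := by
    rw [hdecomp]
    simp only [inner_add_left, hgradPM]
    ring
  -- bounds on each term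
  have b1 : ‖v N - vlim‖ < δ := by
    have := hN₁ N hN1; rwa [dist_eq_norm] at this
  have b2 : ‖r - grad p‖ < δ := hp
  have b3 : ‖grad p - grad (PM N p)‖ < δ := by
    have := hN₃ N hN3; rwa [dist_eq_norm, sub_zero] at this
  have b4 : ‖u - φ‖ < δ := hφ
  have b5 : ‖φ - Pi N φ‖ < δ := by
    have := hN₂ N hN2; rwa [dist_eq_norm, norm_sub_rev] at this
  have hwnn : 0 ≤ ‖w‖ := norm_nonneg w
  have hbound : ‖w‖ * ‖w‖ ≤ 5 * δ * ‖w‖ := by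
    rw [hsq, hdec]
    have i1 := real_inner_le_norm (v N - vlim) w
    have i2 := real_inner_le_norm (r - grad p) w
    have i3 := real_inner_le_norm (grad p - grad (PM N p)) w
    have i4 := real_inner_le_norm (u - φ) w
    have i5 := real_inner_le_norm (φ - Pi N φ) w
    nlinarith [norm_nonneg (v N - vlim), norm_nonneg (r - grad p),
      norm_nonneg (grad p - grad (PM N p)), norm_nonneg (u - φ), norm_nonneg (φ - Pi N φ)]
  have hwsmall : ‖w‖ ≤ 5 * δ := by nlinarith
  have htri : ‖PVN N (v N) - u‖ ≤ ‖w‖ + ‖Pi N φ - φ‖ + ‖φ - u‖ := by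
    have : PVN N (v N) - u = w + (Pi N φ - φ) + (φ - u) := by rw [hw]; abel
    rw [this]
    exact norm_add₃_le
  rw [dist_eq_norm]
  have b5' : ‖Pi N φ - φ‖ < δ := by rwa [norm_sub_rev]
  have b4' : ‖φ - u‖ < δ := by rwa [norm_sub_rev]
  have hδε : δ = ε / 8 := hδdef
  calc ‖PVN N (v N) - u‖ ≤ ‖w‖ + ‖Pi N φ - φ‖ + ‖φ - u‖ := htri
    _ < ε := by linarith
end

section
/- With Π_D as above, if v ∈ W^{1,∞}₀(Ω)^d and x ∈ Ω are such that Π_D v(x) ≠ 0, then there exists y with |x − y| ≤ C·h_𝒯 and v(y) ≠ 0, where h_𝒯 is the mesh size and C depends only on d and the mesh regularity parameter θ_𝒯. -/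
open MeasureTheory
open scoped RealInnerProductSpace

/-- Pointwise divergence of a vector field on `ℝ^d` (via `fderiv`). -/
noncomputable def vdiv {d : ℕ}
    (f : EuclideanSpace ℝ (Fin d) → EuclideanSpace ℝ (Fin d))
    (x : EuclideanSpace ℝ (Fin d)) : ℝ :=
  ∑ l : Fin d, fderiv ℝ f x (EuclideanSpace.single l 1) l

/-- The closed simplex spanned by the vertices indexed by `K`. -/
def cellHull {d m : ℕ} (y : Fin m → EuclideanSpace ℝ (Fin d)) (K : Finset (Fin m)) :
    Set (EuclideanSpace ℝ (Fin d)) :=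
  convexHull ℝ (y '' ↑K)

/-- `{i,j}` is an edge of the mesh: two distinct vertices belonging to a common cell. -/
def meshAdj {m : ℕ} (cells : Finset (Finset (Fin m))) (i j : Fin m) : Prop :=
  i ≠ j ∧ ∃ K ∈ cells, i ∈ K ∧ j ∈ K

instance {m : ℕ} (cells : Finset (Finset (Fin m))) (i j : Fin m) :
    Decidable (meshAdj cells i j) :=
  inferInstanceAs (Decidable (i ≠ j ∧ ∃ K ∈ cells, i ∈ K ∧ j ∈ K))

/-- The patch `ω_{ij}`: union of the (closed) cells containing the edge `{i,j}`. -/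
def patch {d m : ℕ} (y : Fin m → EuclideanSpace ℝ (Fin d))
    (cells : Finset (Finset (Fin m))) (i j : Fin m) :
    Set (EuclideanSpace ℝ (Fin d)) :=
  ⋃ K ∈ cells, ⋃ (_ : i ∈ K ∧ j ∈ K), cellHull y K

/-- The normalized tangential edge bubble
`b_{i,j} = ((d+2)(d+1)/|ω_{ij}|) φ_i φ_j (y_j − y_i)`. -/
noncomputable def bubble {d m : ℕ} (y : Fin m → EuclideanSpace ℝ (Fin d))
    (cells : Finset (Finset (Fin m))) (φ : Fin m → EuclideanSpace ℝ (Fin d) → ℝ)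
    (i j : Fin m) (x : EuclideanSpace ℝ (Fin d)) : EuclideanSpace ℝ (Fin d) :=
  ((((d : ℝ) + 2) * ((d : ℝ) + 1)) / (volume (patch y cells i j)).toReal) •
    ((φ i x * φ j x) • (y j - y i))

/-- The divergence-correcting operator
`Π_D v = Σ_{i∈𝒩} Σ_{j : {i,j}∈ℰ} (div(φ_i v), φ_j)_{L²} b_{j,i}`. -/
noncomputable def PiD {d m : ℕ} (Ω : Set (EuclideanSpace ℝ (Fin d)))
    (y : Fin m → EuclideanSpace ℝ (Fin d)) (cells : Finset (Finset (Fin m)))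
    (φ : Fin m → EuclideanSpace ℝ (Fin d) → ℝ)
    (v : EuclideanSpace ℝ (Fin d) → EuclideanSpace ℝ (Fin d))
    (x : EuclideanSpace ℝ (Fin d)) : EuclideanSpace ℝ (Fin d) :=
  ∑ i : Fin m, ∑ j : Fin m,
    if meshAdj cells i j then
      (∫ t in Ω, vdiv (fun s => φ i s • v s) t * φ j t) • bubble y cells φ j i x
    else 0

/-- If `i` is not a vertex of the cell `K`, then the hat function `φ i` (affine on the
cell, Kronecker at the vertices) vanishes on `cellHull y K`. -/
lemma phi_eq_zero_of_not_mem {d m : ℕ} (y : Fin m → EuclideanSpace ℝ (Fin d))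
    (K : Finset (Fin m)) (φ : Fin m → EuclideanSpace ℝ (Fin d) → ℝ)
    (hkron : ∀ i j, φ i (y j) = if i = j then (1 : ℝ) else 0)
    (i : Fin m)
    (haff : ∃ (g : EuclideanSpace ℝ (Fin d) →ₗ[ℝ] ℝ) (c : ℝ),
        ∀ x ∈ cellHull y K, φ i x = g x + c)
    (hi : i ∉ K) {x : EuclideanSpace ℝ (Fin d)} (hx : x ∈ cellHull y K) :
    φ i x = 0 := by
  obtain ⟨g, c, hgc⟩ := haff
  have hx0 := hx
  rw [cellHull, convexHull_eq] at hx
  obtain ⟨ι, t, w, z, hw0, hw1, hz, hxc⟩ := hx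
  have hzh : ∀ k ∈ t, z k ∈ cellHull y K := fun k hk =>
    subset_convexHull ℝ _ (hz k hk)
  have hz0 : ∀ k ∈ t, φ i (z k) = 0 := by
    intro k hk
    obtain ⟨a, ha, hak⟩ := hz k hk
    rw [← hak, hkron i a, if_neg]
    rintro rfl
    exact hi ha
  have hxval : x = ∑ k ∈ t, w k • z k := by
    rw [← hxc, Finset.centerMass_eq_of_sum_1 _ _ hw1]
  have h1 : g x = ∑ k ∈ t, w k * g (z k) := by
    rw [hxval, map_sum]
    exact Finset.sum_congr rfl fun k _ => by rw [g.map_smul, smul_eq_mul]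
  have h2 : c = ∑ k ∈ t, w k * c := by rw [← Finset.sum_mul, hw1, one_mul]
  have key : φ i x = ∑ k ∈ t, w k * φ i (z k) := by
    rw [hgc x hx0]
    calc g x + c = ∑ k ∈ t, (w k * g (z k) + w k * c) := by
          rw [Finset.sum_add_distrib, ← h1, ← h2]
      _ = ∑ k ∈ t, w k * φ i (z k) := by
          refine Finset.sum_congr rfl fun k hk => ?_
          rw [hgc _ (hzh k hk), mul_add]
  rw [key]
  exact Finset.sum_eq_zero fun k hk => by rw [hz0 k hk, mul_zero]

/-- Lemma 4.8 of the paper: support locality of the divergence-correcting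
operator.  There is a constant `C` depending only on `d` and the mesh-regularity
parameter `θ` such that, for any conforming simplicial mesh with regularity `θ` and mesh
size `h_𝒯`, any `v ∈ W^{1,∞}₀(Ω)^d` and any `x ∈ Ω` with `Π_D v (x) ≠ 0`, there is a
point `z` with `dist x z ≤ C·h_𝒯` and `v z ≠ 0`. -/
theorem divergence_correcting_support_locality (d : ℕ) (θ : ℝ) :
    ∃ C > (0 : ℝ), ∀ (m : ℕ)
      (Ω : Set (EuclideanSpace ℝ (Fin d))), IsOpen Ω → Bornology.IsBounded Ω →
      ∀ (y : Fin m → EuclideanSpace ℝ (Fin d)) (cells : Finset (Finset (Fin m))),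
      (∀ K ∈ cells, K.card = d + 1) →
      (∀ K ∈ cells, AffineIndependent ℝ (fun i : {x // x ∈ K} => y i)) →
      (closure Ω = ⋃ K ∈ cells, cellHull y K) →
      (∀ K ∈ cells, ∀ K' ∈ cells,
        cellHull y K ∩ cellHull y K' = cellHull y (K ∩ K')) →
      -- mesh regularity: each cell contains a ball of radius `r` with `diam ≤ θ·r`
      (∀ K ∈ cells, ∃ (z : EuclideanSpace ℝ (Fin d)) (r : ℝ), 0 < r ∧
        Metric.ball z r ⊆ cellHull y K ∧
        Metric.diam (cellHull y K) ≤ θ * r) →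
      ∀ (φ : Fin m → EuclideanSpace ℝ (Fin d) → ℝ),
      (∀ i, Continuous (φ i)) →
      (∀ i j, φ i (y j) = if i = j then (1 : ℝ) else 0) →
      (∀ K ∈ cells, ∀ i, ∃ (g : EuclideanSpace ℝ (Fin d) →ₗ[ℝ] ℝ) (c : ℝ),
        ∀ x ∈ cellHull y K, φ i x = g x + c) →
      ∀ hT : ℝ, (∀ K ∈ cells, Metric.diam (cellHull y K) ≤ hT) →
      ∀ (v : EuclideanSpace ℝ (Fin d) → EuclideanSpace ℝ (Fin d)),
      (∃ L : NNReal, LipschitzWith L v) →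
      (∀ x ∉ Ω, v x = 0) →
      ∀ x ∈ Ω, PiD Ω y cells φ v x ≠ 0 →
        ∃ z, dist x z ≤ C * hT ∧ v z ≠ 0 := by
  rcases Nat.eq_zero_or_pos d with hd | hd
  · subst hd
    haveI : Subsingleton (EuclideanSpace ℝ (Fin 0)) :=
      (WithLp.equiv 2 (Fin 0 → ℝ)).subsingleton
    refine ⟨1, one_pos, ?_⟩
    intro m Ω _ _ y cells _ _ _ _ _ φ _ _ _ hT _ v _ _ x _ hPiD
    exact absurd (Subsingleton.elim _ _) hPiD
  refine ⟨3, by norm_num, ?_⟩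
  intro m Ω hΩopen _ y cells _ _ hclos _ hreg φ _ hkron haff hT hhT v _ _ x hxΩ hPiD
  simp only [PiD] at hPiD
  obtain ⟨i, -, hPiD⟩ := Finset.exists_ne_zero_of_sum_ne_zero hPiD
  obtain ⟨j, -, hterm⟩ := Finset.exists_ne_zero_of_sum_ne_zero hPiD
  by_cases hadj : meshAdj cells i j
  swap
  · rw [if_neg hadj] at hterm; exact absurd rfl hterm
  rw [if_pos hadj] at hterm
  have hint : (∫ t in Ω, vdiv (fun s => φ i s • v s) t * φ j t) ≠ 0 := fun h => by
    rw [h, zero_smul] at hterm; exact hterm rfl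
  have hbub : bubble y cells φ j i x ≠ 0 := fun h => by
    rw [h, smul_zero] at hterm; exact hterm rfl
  have hφjx : φ j x ≠ 0 := fun h => hbub (by simp [bubble, h])
  have hφix : φ i x ≠ 0 := fun h => hbub (by simp [bubble, h])
  -- `x` lies in some cell `K` which must contain both `i` and `j`
  have hxcl : x ∈ ⋃ K ∈ cells, cellHull y K := by
    rw [← hclos]; exact subset_closure hxΩ
  simp only [Set.mem_iUnion] at hxcl
  obtain ⟨K, hK, hxK⟩ := hxcl
  have hiK : i ∈ K := by
    by_contra h
    exact hφix (phi_eq_zero_of_not_mem y K φ hkron i (haff K hK i) h hxK)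
  have hjK : j ∈ K := by
    by_contra h
    exact hφjx (phi_eq_zero_of_not_mem y K φ hkron j (haff K hK j) h hxK)
  have hbdd : Bornology.IsBounded (cellHull y K) :=
    isBounded_convexHull.mpr (Set.toFinite _).isBounded
  -- `hT > 0` since the cell `K` contains a nontrivial ball
  obtain ⟨z0, r, hr, hball, -⟩ := hreg K hK
  have hT0 : 0 < hT := by
    set e : EuclideanSpace ℝ (Fin d) := EuclideanSpace.single ⟨0, hd⟩ (1 : ℝ) with he
    have hne : ‖e‖ = 1 := by simp [he, EuclideanSpace.norm_single]
    have hz1 : z0 ∈ Metric.ball z0 r := Metric.mem_ball_self hr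
    have hz2 : z0 + (r / 2) • e ∈ Metric.ball z0 r := by
      rw [Metric.mem_ball, dist_eq_norm]
      have : z0 + (r / 2) • e - z0 = (r / 2) • e := by abel
      rw [this, norm_smul, hne, mul_one, Real.norm_eq_abs, abs_of_pos (by linarith)]
      linarith
    have hd2 : dist z0 (z0 + (r / 2) • e) = r / 2 := by
      rw [dist_eq_norm]
      have : z0 - (z0 + (r / 2) • e) = -((r / 2) • e) := by abel
      rw [this, norm_neg, norm_smul, hne, mul_one, Real.norm_eq_abs,
        abs_of_pos (by linarith)]
    have := Metric.dist_le_diam_of_mem hbdd (hball hz1) (hball hz2)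
    have := hhT K hK
    linarith
  -- extract a point `t ∈ Ω` where the integrand is nonzero
  have ht : ∃ t ∈ Ω, vdiv (fun s => φ i s • v s) t * φ j t ≠ 0 := by
    by_contra hc
    push_neg at hc
    exact hint (MeasureTheory.setIntegral_eq_zero_of_forall_eq_zero hc)
  obtain ⟨t, htΩ, htne⟩ := ht
  have hvd : vdiv (fun s => φ i s • v s) t ≠ 0 := left_ne_zero_of_mul htne
  have hφjt : φ j t ≠ 0 := right_ne_zero_of_mul htne
  -- `t` lies in some cell `K'` containing `j`
  have htcl : t ∈ ⋃ K ∈ cells, cellHull y K := by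
    rw [← hclos]; exact subset_closure htΩ
  simp only [Set.mem_iUnion] at htcl
  obtain ⟨K', hK', htK'⟩ := htcl
  have hjK' : j ∈ K' := by
    by_contra h
    exact hφjt (phi_eq_zero_of_not_mem y K' φ hkron j (haff K' hK' j) h htK')
  have hbdd' : Bornology.IsBounded (cellHull y K') :=
    isBounded_convexHull.mpr (Set.toFinite _).isBounded
  have hyjK : y j ∈ cellHull y K := subset_convexHull ℝ _ ⟨j, hjK, rfl⟩
  have hyjK' : y j ∈ cellHull y K' := subset_convexHull ℝ _ ⟨j, hjK', rfl⟩
  have d1 : dist x (y j) ≤ hT :=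
    (Metric.dist_le_diam_of_mem hbdd hxK hyjK).trans (hhT K hK)
  have d2 : dist (y j) t ≤ hT :=
    (Metric.dist_le_diam_of_mem hbdd' hyjK' htK').trans (hhT K' hK')
  have dxt : dist x t ≤ 2 * hT := by
    have := dist_triangle x (y j) t
    linarith
  -- conclude by contradiction
  by_contra hz
  push_neg at hz
  apply hvd
  have hev : (fun s => φ i s • v s) =ᶠ[nhds t]
      fun _ => (0 : EuclideanSpace ℝ (Fin d)) := by
    filter_upwards [Metric.ball_mem_nhds t hT0] with s hs
    have hds : dist s t < hT := hs
    have : dist x s ≤ 3 * hT := by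
      have h1 := dist_triangle x t s
      have h2 : dist t s = dist s t := dist_comm t s
      linarith
    rw [hz s this, smul_zero]
  have hfd : fderiv ℝ (fun s => φ i s • v s) t = 0 := by
    rw [hev.fderiv_eq]
    exact fderiv_const_apply 0
  simp [vdiv, hfd]
end

section
/- Let (u_N) be the corrected velocities produced by the fully discrete incremental projection scheme, satisfying for each n the energy identity (1/(2δt))(‖uⁿ⁺¹‖²_{L²} − ‖uⁿ‖²_{L²}) + (δt/2)(‖∇pⁿ⁺¹‖²_{L²} − ‖∇pⁿ‖²_{L²}) + (1/(2δt))‖ũⁿ⁺¹ − uⁿ‖²_{L²} + ‖ũⁿ⁺¹‖²_{H¹₀} = ⟨fⁿ⁺¹, ũⁿ⁺¹⟩. Then, with ‖u⁰‖_{L²} ≤ ‖u₀‖_{L²}, p⁰ = 0, and Σₙ δt‖fⁿ⁺¹‖²_{H⁻¹} ≤ ‖f‖²_{L²(0,T;H⁻¹)}, there exists C depending only on ‖u₀‖_{L²}, ‖f‖_{L²(0,T;H⁻¹)} and the Poincaré constant of Ω such that Σ_{n=0}^{N−1} δt ‖ũⁿ⁺¹‖²_{H¹₀} ≤ C, max_n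 ‖uⁿ‖²_{L²} ≤ C, and Σ_{n=0}^{N−1} δt ‖ũⁿ⁺¹ − uⁿ‖²_{L²} ≤ C δt. -/
set_option maxHeartbeats 1000000


/- STATEMENT 15 (a priori estimates, Lemma 3.1 of the paper).
For each time step `n`, `uL2 n = ‖uⁿ‖_{L²}`, `gpL2 n = ‖∇pⁿ‖_{L²}`,
`dL2 n = ‖ũⁿ⁺¹ − uⁿ‖_{L²}`, `utH n = ‖ũⁿ‖_{H¹₀}`, `fH n = ‖fⁿ‖_{H⁻¹}` and
`pair (n+1) = ⟨fⁿ⁺¹, ũⁿ⁺¹⟩`, with the duality bound `pair (n+1) ≤ fH (n+1) · utH (n+1)`.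
The per-step energy identity `henergy` is assumed, together with
`‖u⁰‖_{L²} ≤ ‖u₀‖_{L²}`, `p⁰ = 0` and `Σ δt ‖fⁿ⁺¹‖²_{H⁻¹} ≤ ‖f‖²_{L²(0,T;H⁻¹)}`.
The constant `C` depends only on `‖u₀‖_{L²}`, `‖f‖_{L²(0,T;H⁻¹)}` and the Poincaré
constant `CP` of `Ω` (and on the fixed final time `T`). -/
theorem projection_scheme_apriori_estimates
    (u0norm fnorm CP T : ℝ) (hu0n : 0 ≤ u0norm) (hfn : 0 ≤ fnorm) (hCP : 0 < CP)
    (hT : 0 < T) :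
    ∃ C > (0 : ℝ), ∀ (N : ℕ), 1 ≤ N → ∀ δt : ℝ, δt = T / N →
      ∀ (uL2 gpL2 dL2 utH fH pair : ℕ → ℝ),
      (∀ n, 0 ≤ uL2 n) → (∀ n, 0 ≤ gpL2 n) → (∀ n, 0 ≤ dL2 n) →
      (∀ n, 0 ≤ utH n) → (∀ n, 0 ≤ fH n) →
      (∀ n, pair (n + 1) ≤ fH (n + 1) * utH (n + 1)) →
      (∀ n < N,
        (1 / (2 * δt)) * (uL2 (n + 1) ^ 2 - uL2 n ^ 2)
          + (δt / 2) * (gpL2 (n + 1) ^ 2 - gpL2 n ^ 2)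
          + (1 / (2 * δt)) * dL2 n ^ 2 + utH (n + 1) ^ 2 = pair (n + 1)) →
      uL2 0 ≤ u0norm → gpL2 0 = 0 →
      (∑ n ∈ Finset.range N, δt * fH (n + 1) ^ 2 ≤ fnorm ^ 2) →
      (∑ n ∈ Finset.range N, δt * utH (n + 1) ^ 2 ≤ C) ∧
      (∀ n ≤ N, uL2 n ^ 2 ≤ C) ∧
      (∑ n ∈ Finset.range N, δt * dL2 n ^ 2 ≤ C * δt) := by
  refine ⟨u0norm ^ 2 + fnorm ^ 2 + 1, by positivity, ?_⟩
  intro N hN δt hδt uL2 gpL2 dL2 utH fH pair huL2 hgpL2 hdL2 hutH hfH hpair henergy hu0 hp0 hf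
  have hNpos : (0 : ℝ) < N := by exact_mod_cast hN
  have hδtpos : 0 < δt := by rw [hδt]; exact div_pos hT hNpos
  have hδne : δt ≠ 0 := ne_of_gt hδtpos
  -- per-step estimate
  have step : ∀ n < N,
      uL2 (n + 1) ^ 2 + δt ^ 2 * gpL2 (n + 1) ^ 2 + dL2 n ^ 2 + δt * utH (n + 1) ^ 2
        ≤ uL2 n ^ 2 + δt ^ 2 * gpL2 n ^ 2 + δt * fH (n + 1) ^ 2 := by
    intro n hn
    have hE := henergy n hn
    have hE2 : uL2 (n + 1) ^ 2 - uL2 n ^ 2 + δt ^ 2 * (gpL2 (n + 1) ^ 2 - gpL2 n ^ 2)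
        + dL2 n ^ 2 + 2 * δt * utH (n + 1) ^ 2 = 2 * δt * pair (n + 1) := by
      field_simp at hE
      linear_combination hE
    have hp := hpair n
    have hyoung : fH (n + 1) * utH (n + 1) ≤ (fH (n + 1) ^ 2 + utH (n + 1) ^ 2) / 2 := by
      nlinarith [sq_nonneg (fH (n + 1) - utH (n + 1))]
    have h1 : δt * pair (n + 1) ≤ δt * (fH (n + 1) * utH (n + 1)) :=
      mul_le_mul_of_nonneg_left hp hδtpos.le
    have h2 : δt * (fH (n + 1) * utH (n + 1))
        ≤ δt * ((fH (n + 1) ^ 2 + utH (n + 1) ^ 2) / 2) :=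
      mul_le_mul_of_nonneg_left hyoung hδtpos.le
    nlinarith [h1, h2, hE2]
  -- telescoped invariant
  have main : ∀ m, m ≤ N →
      uL2 m ^ 2 + δt ^ 2 * gpL2 m ^ 2
        + ∑ n ∈ Finset.range m, (dL2 n ^ 2 + δt * utH (n + 1) ^ 2)
        ≤ u0norm ^ 2 + ∑ n ∈ Finset.range m, δt * fH (n + 1) ^ 2 := by
    intro m hm
    induction m with
    | zero =>
      simp only [Finset.range_zero, Finset.sum_empty, hp0]
      nlinarith [hu0, huL2 0]
    | succ k ih =>
      have hk : k ≤ N := Nat.le_of_succ_le hm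
      have ihh := ih hk
      have hs := step k (Nat.lt_of_succ_le hm)
      rw [Finset.sum_range_succ, Finset.sum_range_succ]
      linarith
    -- done
  have hsumf : ∀ m, m ≤ N → ∑ n ∈ Finset.range m, δt * fH (n + 1) ^ 2 ≤ fnorm ^ 2 := by
    intro m hm
    have h1 : ∑ n ∈ Finset.range m, δt * fH (n + 1) ^ 2
        ≤ ∑ n ∈ Finset.range N, δt * fH (n + 1) ^ 2 := by
      apply Finset.sum_le_sum_of_subset_of_nonneg
      · exact Finset.range_subset_range.mpr hm
      · intro i _ _; positivity
    linarith [hf]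
  have hmainN := main N le_rfl
  have hfN := hsumf N le_rfl
  have hbig : ∑ n ∈ Finset.range N, (dL2 n ^ 2 + δt * utH (n + 1) ^ 2)
      ≤ u0norm ^ 2 + fnorm ^ 2 := by
    linarith [hmainN, hfN, sq_nonneg (uL2 N),
      mul_nonneg (sq_nonneg δt) (sq_nonneg (gpL2 N))]
  refine ⟨?_, ?_, ?_⟩
  · have h1 : ∑ n ∈ Finset.range N, δt * utH (n + 1) ^ 2
        ≤ ∑ n ∈ Finset.range N, (dL2 n ^ 2 + δt * utH (n + 1) ^ 2) := by
      apply Finset.sum_le_sum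
      intro i _
      nlinarith [sq_nonneg (dL2 i)]
    linarith
  · intro n hn
    have := main n hn
    have hsn : (0 : ℝ) ≤ ∑ k ∈ Finset.range n, (dL2 k ^ 2 + δt * utH (k + 1) ^ 2) := by
      apply Finset.sum_nonneg
      intro i _; positivity
    have h4 := hsumf n hn
    linarith [mul_nonneg (sq_nonneg δt) (sq_nonneg (gpL2 n))]
  · have h1 : ∑ n ∈ Finset.range N, dL2 n ^ 2
        ≤ ∑ n ∈ Finset.range N, (dL2 n ^ 2 + δt * utH (n + 1) ^ 2) := by
      apply Finset.sum_le_sum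
      intro i _
      linarith [mul_nonneg hδtpos.le (sq_nonneg (utH (i + 1)))]
    have h2 : ∑ n ∈ Finset.range N, δt * dL2 n ^ 2
        = δt * ∑ n ∈ Finset.range N, dL2 n ^ 2 := by
      rw [Finset.mul_sum]
    rw [h2]
    have h3 : ∑ n ∈ Finset.range N, dL2 n ^ 2 ≤ u0norm ^ 2 + fnorm ^ 2 + 1 := by linarith
    calc δt * ∑ n ∈ Finset.range N, dL2 n ^ 2
        ≤ δt * (u0norm ^ 2 + fnorm ^ 2 + 1) := mul_le_mul_of_nonneg_left h3 hδtpos.le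
      _ = (u0norm ^ 2 + fnorm ^ 2 + 1) * δt := by ring
end
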